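/- Let H₀ be a complex Hilbert space, B ∈ B(H₀) an invertible positive operator with 0 ≤ B ≤ I and ker(I−B) = {0}. With a = √2/2, x = (x₁, x₂), y = (y₁, y₂) ∈ H₀ ⊕ H₀, define m₁ = a²‖B^{1/2}x₁+B^{−1/2}x₂‖² + a²‖B^{1/2}x₁−B^{−1/2}x₂‖², m₂ = a²‖B^{1/2}x₁+B^{−1/2}x₂‖² + a²‖B^{−1/2}y₁−B^{1/2}y₂‖², m₃ = a²‖B^{−1/2}y₁+B^{1/2}y₂‖² + a²‖B^{1/2}x₁−B^{−1/2}x₂‖², m₄ = a²‖B^{−1/2}y₁+B^{1/2}y₂‖² + a²‖B^{−1/2}y₁−B^{1/2}y₂‖², and a₁ = ‖x₁‖²+‖x₂‖², a₂ = ‖P^⊥x‖²+‖Py‖², a₃ = ‖Q^⊥x‖²+‖Qy‖², a₄ = ‖y₁‖²+‖y₂‖², where P and Q are the orthogonal projections onto N = {(u, Bu) : u ∈ H₀} and M = {(u, −Bu) : u ∈ H₀}. Then there exists c ≥ 0, depending only on B, such that a₁ ≤ c·m₁, a₂ ≤ c·m₃, a₃ ≤ c·m₂ and a₄ ≤ c·m₄;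 in particular min{a₁, a₂, a₃, a₄} ≤ c·min{m₁, m₂, m₃, m₄}. -/

import Mathlib

noncomputable section

variable {H₀ : Type*} [NormedAddCommGroup H₀] [InnerProductSpace ℂ H₀] [CompleteSpace H₀]

/-- The operator on `H₀ ⊕ H₀ = WithLp 2 (H₀ × H₀)` given by the block matrix
`[[A, B], [C, D]]`. -/
def blk (A B C D : H₀ →L[ℂ] H₀) : WithLp 2 (H₀ × H₀) →L[ℂ] WithLp 2 (H₀ × H₀) :=
  (((WithLp.prodContinuousLinearEquiv 2 ℂ H₀ H₀).symm :
      H₀ × H₀ →L[ℂ] WithLp 2 (H₀ × H₀)) ∘L ((A.coprod B).prod (C.coprod D))) ∘L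
    ((WithLp.prodContinuousLinearEquiv 2 ℂ H₀ H₀) : WithLp 2 (H₀ × H₀) →L[ℂ] H₀ × H₀)

/-- The vector `(u, v) ∈ H₀ ⊕ H₀`. -/
def vec₂ (u v : H₀) : WithLp 2 (H₀ × H₀) := (WithLp.equiv 2 (H₀ × H₀)).symm (u, v)

set_option linter.unusedSectionVars false in
lemma blk_mul_blk_apply (A B C D A' B' C' D' : H₀ →L[ℂ] H₀) (u v : H₀) :
    (blk A B C D * blk A' B' C' D') (vec₂ u v) =
      vec₂ (A (A' u + B' v) + B (C' u + D' v)) (C (A' u + B' v) + D (C' u + D' v)) := rfl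

set_option linter.unusedSectionVars false in
lemma vec₂_sub (u v u' v' : H₀) : vec₂ u v - vec₂ u' v' = vec₂ (u - u') (v - v') := rfl

set_option linter.unusedSectionVars false in
lemma vec₂_norm_sq (u v : H₀) : ‖vec₂ u v‖ ^ 2 = ‖u‖ ^ 2 + ‖v‖ ^ 2 :=
  WithLp.prod_norm_sq_eq_of_L2 (vec₂ u v)

set_option linter.unusedSectionVars false in
lemma opsq (T : H₀ →L[ℂ] H₀) (z : H₀) : ‖T z‖ ^ 2 ≤ ‖T‖ ^ 2 * ‖z‖ ^ 2 := by
  rw [← mul_pow]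
  exact pow_le_pow_left₀ (norm_nonneg _) (T.le_opNorm z) 2

set_option linter.unusedSectionVars false in
lemma parall (p q : H₀) : ‖p + q‖ ^ 2 + ‖p - q‖ ^ 2 = 2 * (‖p‖ ^ 2 + ‖q‖ ^ 2) := by
  have := parallelogram_law_with_norm ℂ p q
  simpa [pow_two] using this

set_option maxHeartbeats 2000000 in
/-- With `B` an invertible positive contraction with `ker (I−B) = {0}`,
`R = B^{1/2}`, `Rinv = B^{−1/2}`, `G = (I+B²)⁻¹`, `Γ = G ⊕ G`,
`P = Γ·[[I, B], [B, B²]]` and `Q = Γ·[[I, −B], [−B, B²]]` the orthogonal projections onto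
`N = {(u, Bu)}` and `M = {(u, −Bu)}`, there is a constant `c ≥ 0`, depending only on `B`,
such that `a₁ ≤ c·m₁`, `a₂ ≤ c·m₃`, `a₃ ≤ c·m₂`, `a₄ ≤ c·m₄`, and in particular
`min {a₁, a₂, a₃, a₄} ≤ c · min {m₁, m₂, m₃, m₄}`. -/
theorem norms_of_vector_functionals_stmt16
    (B : H₀ →L[ℂ] H₀) (hBpos : B.IsPositive) (hB1 : ((1 : H₀ →L[ℂ] H₀) - B).IsPositive)
    (hBunit : IsUnit B) (hBker : LinearMap.ker (((1 : H₀ →L[ℂ] H₀) - B) : H₀ →ₗ[ℂ] H₀) = ⊥)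
    (R Rinv : H₀ →L[ℂ] H₀) (hRpos : R.IsPositive) (hRsq : R * R = B)
    (hRRinv : R * Rinv = 1) (hRinvR : Rinv * R = 1)
    (G : H₀ →L[ℂ] H₀) (hG1 : G * (1 + B * B) = 1) (hG2 : (1 + B * B) * G = 1) :
    ∃ c : ℝ, 0 ≤ c ∧ ∀ x₁ x₂ y₁ y₂ : H₀,
      let a : ℝ := Real.sqrt 2 / 2
      let P : WithLp 2 (H₀ × H₀) →L[ℂ] WithLp 2 (H₀ × H₀) :=
        blk G 0 0 G * blk 1 B B (B * B)
      let Q : WithLp 2 (H₀ × H₀) →L[ℂ] WithLp 2 (H₀ × H₀) :=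
        blk G 0 0 G * blk 1 (-B) (-B) (B * B)
      let x := vec₂ x₁ x₂
      let y := vec₂ y₁ y₂
      let m₁ := a ^ 2 * ‖R x₁ + Rinv x₂‖ ^ 2 + a ^ 2 * ‖R x₁ - Rinv x₂‖ ^ 2
      let m₂ := a ^ 2 * ‖R x₁ + Rinv x₂‖ ^ 2 + a ^ 2 * ‖Rinv y₁ - R y₂‖ ^ 2
      let m₃ := a ^ 2 * ‖Rinv y₁ + R y₂‖ ^ 2 + a ^ 2 * ‖R x₁ - Rinv x₂‖ ^ 2
      let m₄ := a ^ 2 * ‖Rinv y₁ + R y₂‖ ^ 2 + a ^ 2 * ‖Rinv y₁ - R y₂‖ ^ 2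
      let a₁ := ‖x₁‖ ^ 2 + ‖x₂‖ ^ 2
      let a₂ := ‖x - P x‖ ^ 2 + ‖P y‖ ^ 2
      let a₃ := ‖x - Q x‖ ^ 2 + ‖Q y‖ ^ 2
      let a₄ := ‖y₁‖ ^ 2 + ‖y₂‖ ^ 2
      (a₁ ≤ c * m₁ ∧ a₂ ≤ c * m₃ ∧ a₃ ≤ c * m₂ ∧ a₄ ≤ c * m₄) ∧
        min (min a₁ a₂) (min a₃ a₄) ≤ c * min (min m₁ m₂) (min m₃ m₄) := by
  have hRR : ∀ z : H₀, R (R z) = B z := fun z => by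
    rw [← ContinuousLinearMap.mul_apply, hRsq]
  have hRRi : ∀ z : H₀, R (Rinv z) = z := fun z => by
    rw [← ContinuousLinearMap.mul_apply, hRRinv, ContinuousLinearMap.one_apply]
  have hRiR : ∀ z : H₀, Rinv (R z) = z := fun z => by
    rw [← ContinuousLinearMap.mul_apply, hRinvR, ContinuousLinearMap.one_apply]
  have hz : ∀ z : H₀, z - G z = G (B (B z)) := by
    intro z
    have h := congrArg (fun f : H₀ →L[ℂ] H₀ => f z) hG1
    simp only [ContinuousLinearMap.mul_apply, ContinuousLinearMap.add_apply, map_add,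
      ContinuousLinearMap.one_apply] at h
    rw [sub_eq_iff_eq_add']
    exact h.symm
  set K : ℝ := ‖G * B * R‖ ^ 2 + ‖G * R‖ ^ 2 with hK
  set c : ℝ := max (max (‖R‖ ^ 2) (‖Rinv‖ ^ 2)) (2 * K) with hc
  have hcR : ‖R‖ ^ 2 ≤ c := le_max_of_le_left (le_max_left _ _)
  have hcRinv : ‖Rinv‖ ^ 2 ≤ c := le_max_of_le_left (le_max_right _ _)
  have hcK : 2 * K ≤ c := le_max_right _ _
  have hc0 : (0 : ℝ) ≤ c := le_trans (by positivity) hcR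
  refine ⟨c, hc0, ?_⟩
  intro x₁ x₂ y₁ y₂
  intro a P Q x y m₁ m₂ m₃ m₄ a₁ a₂ a₃ a₄
  have ha2 : a ^ 2 = 1 / 2 := by
    show (Real.sqrt 2 / 2) ^ 2 = 1 / 2
    rw [div_pow, Real.sq_sqrt (by norm_num : (0:ℝ) ≤ 2)]
    norm_num
  set s := R x₁ - Rinv x₂ with hs
  set u := R x₁ + Rinv x₂ with hu
  set t := Rinv y₁ + R y₂ with ht
  set w := Rinv y₁ - R y₂ with hw
  have hRs : R s = B x₁ - x₂ := by rw [hs, map_sub, hRR, hRRi]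
  have hRu : R u = B x₁ + x₂ := by rw [hu, map_add, hRR, hRRi]
  have hRt : R t = y₁ + B y₂ := by rw [ht, map_add, hRRi, hRR]
  have hRw : R w = y₁ - B y₂ := by rw [hw, map_sub, hRRi, hRR]
  -- values of the m's
  have hm₁ : m₁ = ‖R x₁‖ ^ 2 + ‖Rinv x₂‖ ^ 2 := by
    show a ^ 2 * ‖R x₁ + Rinv x₂‖ ^ 2 + a ^ 2 * ‖R x₁ - Rinv x₂‖ ^ 2 = _
    have := parall (R x₁) (Rinv x₂)
    rw [ha2]; linarith
  have hm₄ : m₄ = ‖Rinv y₁‖ ^ 2 + ‖R y₂‖ ^ 2 := by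
    show a ^ 2 * ‖Rinv y₁ + R y₂‖ ^ 2 + a ^ 2 * ‖Rinv y₁ - R y₂‖ ^ 2 = _
    have := parall (Rinv y₁) (R y₂)
    rw [ha2]; linarith
  have hm₂ : m₂ = 1 / 2 * ‖u‖ ^ 2 + 1 / 2 * ‖w‖ ^ 2 := by
    show a ^ 2 * ‖R x₁ + Rinv x₂‖ ^ 2 + a ^ 2 * ‖Rinv y₁ - R y₂‖ ^ 2 = _
    rw [ha2, hu, hw]
  have hm₃ : m₃ = 1 / 2 * ‖t‖ ^ 2 + 1 / 2 * ‖s‖ ^ 2 := by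
    show a ^ 2 * ‖Rinv y₁ + R y₂‖ ^ 2 + a ^ 2 * ‖R x₁ - Rinv x₂‖ ^ 2 = _
    rw [ha2, ht, hs]
  -- bound a₁
  have hx1 : ‖x₁‖ ^ 2 ≤ ‖Rinv‖ ^ 2 * ‖R x₁‖ ^ 2 := by
    calc ‖x₁‖ ^ 2 = ‖Rinv (R x₁)‖ ^ 2 := by rw [hRiR]
    _ ≤ _ := opsq Rinv (R x₁)
  have hx2 : ‖x₂‖ ^ 2 ≤ ‖R‖ ^ 2 * ‖Rinv x₂‖ ^ 2 := by
    calc ‖x₂‖ ^ 2 = ‖R (Rinv x₂)‖ ^ 2 := by rw [hRRi]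
    _ ≤ _ := opsq R (Rinv x₂)
  have h₁ : a₁ ≤ c * m₁ := by
    show ‖x₁‖ ^ 2 + ‖x₂‖ ^ 2 ≤ c * m₁
    rw [hm₁]
    have n1 : (0:ℝ) ≤ ‖R x₁‖ ^ 2 := by positivity
    have n2 : (0:ℝ) ≤ ‖Rinv x₂‖ ^ 2 := by positivity
    nlinarith [mul_le_mul_of_nonneg_right hcRinv n1, mul_le_mul_of_nonneg_right hcR n2]
  -- bound a₄
  have hy1 : ‖y₁‖ ^ 2 ≤ ‖R‖ ^ 2 * ‖Rinv y₁‖ ^ 2 := by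
    calc ‖y₁‖ ^ 2 = ‖R (Rinv y₁)‖ ^ 2 := by rw [hRRi]
    _ ≤ _ := opsq R (Rinv y₁)
  have hy2 : ‖y₂‖ ^ 2 ≤ ‖Rinv‖ ^ 2 * ‖R y₂‖ ^ 2 := by
    calc ‖y₂‖ ^ 2 = ‖Rinv (R y₂)‖ ^ 2 := by rw [hRiR]
    _ ≤ _ := opsq Rinv (R y₂)
  have h₄ : a₄ ≤ c * m₄ := by
    show ‖y₁‖ ^ 2 + ‖y₂‖ ^ 2 ≤ c * m₄
    rw [hm₄]
    have n1 : (0:ℝ) ≤ ‖Rinv y₁‖ ^ 2 := by positivity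
    have n2 : (0:ℝ) ≤ ‖R y₂‖ ^ 2 := by positivity
    nlinarith [mul_le_mul_of_nonneg_right hcR n1, mul_le_mul_of_nonneg_right hcRinv n2]
  -- compute P and Q applied to x and y
  have hPx : P x = vec₂ (G (x₁ + B x₂)) (G (B x₁ + (B * B) x₂)) := by
    show (blk G 0 0 G * blk 1 B B (B * B)) (vec₂ x₁ x₂) = _
    rw [blk_mul_blk_apply]; simp
  have hxPx : x - P x = vec₂ ((G * B * R) s) (-((G * R) s)) := by
    rw [show x - P x = vec₂ x₁ x₂ - P x from rfl, hPx, vec₂_sub]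
    congr 1
    · simp only [ContinuousLinearMap.mul_apply, hRs, map_add, map_sub]
      rw [← hz x₁]; abel
    · simp only [ContinuousLinearMap.mul_apply, hRs, map_add, map_sub]
      rw [← hz x₂]; abel
  have hPy : P y = vec₂ ((G * R) t) ((G * B * R) t) := by
    show (blk G 0 0 G * blk 1 B B (B * B)) (vec₂ y₁ y₂) = _
    rw [blk_mul_blk_apply]
    simp only [ContinuousLinearMap.mul_apply, hRt, map_add, ContinuousLinearMap.one_apply,
      ContinuousLinearMap.zero_apply, add_zero, zero_add]
  have hQx : Q x = vec₂ (G (x₁ - B x₂)) (G ((B * B) x₂ - B x₁)) := by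
    show (blk G 0 0 G * blk 1 (-B) (-B) (B * B)) (vec₂ x₁ x₂) = _
    rw [blk_mul_blk_apply]
    simp [sub_eq_add_neg, add_comm]
  have hxQx : x - Q x = vec₂ ((G * B * R) u) ((G * R) u) := by
    rw [show x - Q x = vec₂ x₁ x₂ - Q x from rfl, hQx, vec₂_sub]
    congr 1
    · simp only [ContinuousLinearMap.mul_apply, hRu, map_add, map_sub]
      rw [← hz x₁]; abel
    · simp only [ContinuousLinearMap.mul_apply, hRu, map_add, map_sub]
      rw [← hz x₂]; abel
  have hQy : Q y = vec₂ ((G * R) w) (-((G * B * R) w)) := by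
    show (blk G 0 0 G * blk 1 (-B) (-B) (B * B)) (vec₂ y₁ y₂) = _
    rw [blk_mul_blk_apply]
    simp only [ContinuousLinearMap.mul_apply, hRw, map_add, map_sub, map_neg,
      ContinuousLinearMap.one_apply, ContinuousLinearMap.zero_apply, add_zero, zero_add,
      ContinuousLinearMap.neg_apply, neg_sub, sub_eq_add_neg, neg_neg, neg_add]
    congr 1 <;> abel
  -- bound a₂
  have e₂ : a₂ ≤ K * (‖s‖ ^ 2 + ‖t‖ ^ 2) := by
    show ‖x - P x‖ ^ 2 + ‖P y‖ ^ 2 ≤ _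
    rw [hxPx, hPy, vec₂_norm_sq, vec₂_norm_sq, norm_neg, hK]
    nlinarith [opsq (G * B * R) s, opsq (G * R) s, opsq (G * R) t, opsq (G * B * R) t]
  have h₂ : a₂ ≤ c * m₃ := by
    rw [hm₃]
    calc a₂ ≤ K * (‖s‖ ^ 2 + ‖t‖ ^ 2) := e₂
    _ = 2 * K * (1 / 2 * ‖t‖ ^ 2 + 1 / 2 * ‖s‖ ^ 2) := by ring
    _ ≤ c * (1 / 2 * ‖t‖ ^ 2 + 1 / 2 * ‖s‖ ^ 2) :=
      mul_le_mul_of_nonneg_right hcK (by positivity)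
  -- bound a₃
  have e₃ : a₃ ≤ K * (‖u‖ ^ 2 + ‖w‖ ^ 2) := by
    show ‖x - Q x‖ ^ 2 + ‖Q y‖ ^ 2 ≤ _
    rw [hxQx, hQy, vec₂_norm_sq, vec₂_norm_sq, norm_neg, hK]
    nlinarith [opsq (G * B * R) u, opsq (G * R) u, opsq (G * R) w, opsq (G * B * R) w]
  have h₃ : a₃ ≤ c * m₂ := by
    rw [hm₂]
    calc a₃ ≤ K * (‖u‖ ^ 2 + ‖w‖ ^ 2) := e₃
    _ = 2 * K * (1 / 2 * ‖u‖ ^ 2 + 1 / 2 * ‖w‖ ^ 2) := by ring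
    _ ≤ c * (1 / 2 * ‖u‖ ^ 2 + 1 / 2 * ‖w‖ ^ 2) :=
      mul_le_mul_of_nonneg_right hcK (by positivity)
  refine ⟨⟨h₁, h₂, h₃, h₄⟩, ?_⟩
  rw [mul_min_of_nonneg _ _ hc0, mul_min_of_nonneg _ _ hc0, mul_min_of_nonneg _ _ hc0]
  exact le_min
    (le_min (le_trans (min_le_of_left_le (min_le_left _ _)) h₁)
      (le_trans (min_le_of_right_le (min_le_left _ _)) h₃))
    (le_min (le_trans (min_le_of_left_le (min_le_right _ _)) h₂)
      (le_trans (min_le_of_right_le (min_le_right _ _)) h₄))
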